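/- arXiv:math/0606035 — 2 statements merged into one kernel-verified Lean document; each statement's English description precedes it below -/
import Mathlib

section
/- For each multi-index α ∈ ℕⁿ with |α| = k, the function Q_α(x,t) = t^{k/2} φ_α(x/(2√t)) e^{|x|²/(8t)}, defined for t > 0, is backward caloric: ΔQ_α + ∂_t Q_α = 0 on ℝⁿ × (0,∞). -/
open Real Finset
open scoped ContDiff

/-- The one-dimensional Hermite functions
`h k x = (2^k k! sqrt π)^{-1/2} (-1)^k e^{x²/2} (d/dx)^k e^{-x²}`. -/
noncomputable def hermiteFn (k : ℕ) (x : ℝ) : ℝ :=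
  (Real.sqrt (2 ^ k * (Nat.factorial k : ℝ) * Real.sqrt Real.pi))⁻¹ * (-1 : ℝ) ^ k *
    Real.exp (x ^ 2 / 2) * iteratedDeriv k (fun y : ℝ => Real.exp (-y ^ 2)) x

/-- The n-dimensional Hermite functions `φ_α x = ∏ j, h_{α j} (x j)`. -/
noncomputable def hermiteFnN (n : ℕ) (α : Fin n → ℕ) (x : EuclideanSpace ℝ (Fin n)) : ℝ :=
  ∏ j, hermiteFn (α j) (x j)

/-- The kernel `Φ_k(x,y) = ∑_{|α| = k} φ_α(x) φ_α(y)` of the projection onto Hermite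
functions of degree `k`. -/
noncomputable def PhiK (n k : ℕ) (x y : EuclideanSpace ℝ (Fin n)) : ℝ :=
  ∑ α ∈ Finset.Nat.antidiagonalTuple n k, hermiteFnN n α x * hermiteFnN n α y

/-- The Laplacian of `f : ℝⁿ → ℝ`, as the sum of the second derivatives along the
coordinate directions. -/
noncomputable def lap (n : ℕ) (f : EuclideanSpace ℝ (Fin n) → ℝ)
    (x : EuclideanSpace ℝ (Fin n)) : ℝ :=
  ∑ j : Fin n, iteratedDeriv 2 (fun t : ℝ => f (x + t • EuclideanSpace.single j (1 : ℝ))) 0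

/-- The backward caloric functions `Q_α(x,t) = t^{|α|/2} φ_α(x/(2√t)) e^{|x|²/(8t)}`. -/
noncomputable def Qfun (n : ℕ) (α : Fin n → ℕ) (x : EuclideanSpace ℝ (Fin n)) (t : ℝ) : ℝ :=
  Real.sqrt t ^ (∑ j, α j) * hermiteFnN n α ((2 * Real.sqrt t)⁻¹ • x) *
    Real.exp (‖x‖ ^ 2 / (8 * t))

open Real
open scoped ContDiff

noncomputable def gg (k : ℕ) : ℝ → ℝ := iteratedDeriv k (fun y : ℝ => Real.exp (-y ^ 2))

lemma contDiff_gg (k : ℕ) : ContDiff ℝ ∞ (gg k) := by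
  have h0 : ContDiff ℝ ∞ (fun y : ℝ => Real.exp (-y ^ 2)) :=
    Real.contDiff_exp.comp ((contDiff_id (E := ℝ) (𝕜 := ℝ)).pow 2).neg
  have h := h0.iterate_deriv k
  rw [gg, iteratedDeriv_eq_iterate]
  exact h

lemma gg_hasDerivAt (k : ℕ) (x : ℝ) : HasDerivAt (gg k) (gg (k+1) x) x := by
  have hd : DifferentiableAt ℝ (gg k) x := by
    have := (contDiff_gg k).differentiable (by norm_num)
    exact this.differentiableAt
  have : gg (k+1) = deriv (gg k) := by
    rw [gg, gg, iteratedDeriv_succ]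
  rw [this]
  exact hd.hasDerivAt

noncomputable def psiF (k : ℕ) (x : ℝ) : ℝ := (-1 : ℝ)^k * Real.exp (x^2/2) * gg k x

lemma psiF_hasDerivAt (k : ℕ) (x : ℝ) :
    HasDerivAt (psiF k) (x * psiF k x - psiF (k+1) x) x := by
  have he : HasDerivAt (fun x : ℝ => Real.exp (x^2/2)) (Real.exp (x^2/2) * x) x := by
    have h1 : HasDerivAt (fun x : ℝ => x^2/2) x x := by
      simpa using ((hasDerivAt_pow 2 x).div_const 2)
    simpa using h1.exp
  have hfun : psiF k = fun y => (-1:ℝ)^k * (Real.exp (y^2/2) * gg k y) := by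
    funext y; rw [psiF]; ring
  rw [hfun]
  have h2 := (he.mul (gg_hasDerivAt k x)).const_mul ((-1:ℝ)^k)
  refine h2.congr_deriv ?_
  simp only [psiF, pow_succ]
  ring

lemma gg_deriv_step (a b : ℕ) (c : ℝ)
    (h : gg (a+1) = fun x => -2*x*gg a x - c * gg b x) (x : ℝ) :
    gg (a+2) x = -2*gg a x - 2*x*gg (a+1) x - c * gg (b+1) x := by
  have hd : HasDerivAt (fun x : ℝ => -2*x*gg a x - c * gg b x)
      (-2*gg a x - 2*x*gg (a+1) x - c * gg (b+1) x) x := by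
    have h3 := (((hasDerivAt_id x).const_mul (-2:ℝ)).mul (gg_hasDerivAt a x)).sub
      ((gg_hasDerivAt b x).const_mul c)
    refine h3.congr_deriv ?_
    simp only [id_eq]
    ring
  have h2 : gg (a+2) x = deriv (gg (a+1)) x := by
    rw [gg, gg, iteratedDeriv_succ]
  rw [h2]
  conv_lhs => rw [h]
  exact hd.deriv

lemma gg_zero : gg 0 = fun y : ℝ => Real.exp (-y^2) := by rw [gg, iteratedDeriv_zero]

lemma gg_one : gg 1 = fun x => -2*x*gg 0 x - 0 * gg 0 x := by
  funext x
  have h1 : HasDerivAt (fun y : ℝ => -y^2) (-(2*x)) x := by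
    refine (hasDerivAt_pow 2 x).neg.congr_deriv ?_
    norm_num
  have hd : HasDerivAt (fun y : ℝ => Real.exp (-y^2))
      (-2*x*Real.exp (-x^2) - 0 * Real.exp (-x^2)) x := by
    convert h1.exp using 1
    ring
  have h2 : gg 1 x = deriv (gg 0) x := by rw [gg, gg, iteratedDeriv_succ, iteratedDeriv_zero]
  rw [h2]
  simp only [gg_zero]
  rw [hd.deriv]

lemma gg_rec (k : ℕ) (x : ℝ) :
    gg (k+2) x = -2*x*gg (k+1) x - (2*(k+1) : ℝ) * gg k x := by
  induction k generalizing x with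
  | zero =>
    have := gg_deriv_step 0 0 0 gg_one x
    rw [this]; norm_num; ring
  | succ k ih =>
    have hf : gg (k+2) = fun x => -2*x*gg (k+1) x - (2*(k+1) : ℝ) * gg k x := funext ih
    have := gg_deriv_step (k+1) k (2*(k+1) : ℝ) hf x
    rw [this]
    push_cast
    ring

lemma psiF_rec (k : ℕ) (x : ℝ) :
    psiF (k+2) x = 2*x*psiF (k+1) x - (2*(k+1) : ℝ) * psiF k x := by
  simp only [psiF]
  rw [gg_rec k x]
  simp only [pow_succ]
  ring

lemma psiF_deriv2 (k : ℕ) (x : ℝ) :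
    HasDerivAt (fun x => x * psiF k x - psiF (k+1) x)
      ((x^2 - 2*k - 1) * psiF k x) x := by
  have hd := ((hasDerivAt_id x).mul (psiF_hasDerivAt k x)).sub (psiF_hasDerivAt (k+1) x)
  refine hd.congr_deriv ?_
  have h2 : psiF (k+1+1) x = 2*x*psiF (k+1) x - (2*(k+1) : ℝ) * psiF k x := psiF_rec k x
  rw [h2]
  simp only [id_eq]
  ring

noncomputable def cK (k : ℕ) : ℝ :=
  (Real.sqrt (2 ^ k * (Nat.factorial k : ℝ) * Real.sqrt Real.pi))⁻¹

lemma hermiteFn_eq (k : ℕ) : hermiteFn k = fun x => cK k * psiF k x := by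
  funext x
  rw [hermiteFn, psiF, cK, gg]
  ring

noncomputable def dH (k : ℕ) (x : ℝ) : ℝ := cK k * (x * psiF k x - psiF (k+1) x)

lemma hermiteFn_hasDerivAt (k : ℕ) (x : ℝ) : HasDerivAt (hermiteFn k) (dH k x) x := by
  rw [hermiteFn_eq]
  exact (psiF_hasDerivAt k x).const_mul _

lemma dH_hasDerivAt (k : ℕ) (x : ℝ) :
    HasDerivAt (dH k) ((x^2 - 2*k - 1) * hermiteFn k x) x := by
  have h := (psiF_deriv2 k x).const_mul (cK k)
  have hd : dH k = fun x => cK k * (x * psiF k x - psiF (k+1) x) := rfl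
  rw [hd, hermiteFn_eq]
  refine h.congr_deriv ?_
  ring

noncomputable def Ffun (k : ℕ) (t ξ : ℝ) : ℝ :=
  Real.sqrt t ^ k * hermiteFn k ((2*Real.sqrt t)⁻¹ * ξ) * Real.exp (ξ^2/(8*t))

noncomputable def FxD (k : ℕ) (t ξ : ℝ) : ℝ :=
  Real.sqrt t ^ k * (dH k ((2*Real.sqrt t)⁻¹*ξ) * (2*Real.sqrt t)⁻¹ * Real.exp (ξ^2/(8*t))
    + hermiteFn k ((2*Real.sqrt t)⁻¹*ξ) * (Real.exp (ξ^2/(8*t)) * (ξ/(4*t))))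

noncomputable def FxxD (k : ℕ) (t ξ : ℝ) : ℝ :=
  Real.sqrt t ^ k * (
    (((2*Real.sqrt t)⁻¹*ξ)^2 - 2*k - 1) * hermiteFn k ((2*Real.sqrt t)⁻¹*ξ)
        * (2*Real.sqrt t)⁻¹ * (2*Real.sqrt t)⁻¹ * Real.exp (ξ^2/(8*t))
    + dH k ((2*Real.sqrt t)⁻¹*ξ) * (2*Real.sqrt t)⁻¹
        * (Real.exp (ξ^2/(8*t)) * (ξ/(4*t))) * 2
    + hermiteFn k ((2*Real.sqrt t)⁻¹*ξ)
        * (Real.exp (ξ^2/(8*t)) * (ξ/(4*t)) * (ξ/(4*t)) + Real.exp (ξ^2/(8*t)) * (1/(4*t))))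

noncomputable def FtD (k : ℕ) (t ξ : ℝ) : ℝ :=
  ((k : ℝ) * Real.sqrt t^(k-1) * (1/(2*Real.sqrt t))) * hermiteFn k ((2*Real.sqrt t)⁻¹*ξ)
      * Real.exp (ξ^2/(8*t))
  + Real.sqrt t ^ k * (dH k ((2*Real.sqrt t)⁻¹*ξ)
      * (-(2*(1/(2*Real.sqrt t))) / (2*Real.sqrt t)^2 * ξ)) * Real.exp (ξ^2/(8*t))
  + Real.sqrt t ^ k * hermiteFn k ((2*Real.sqrt t)⁻¹*ξ)
      * (Real.exp (ξ^2/(8*t)) * -(ξ^2*8/(8*t)^2))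

lemma exp_hasDerivAt_x (t ξ : ℝ) (ht : 0 < t) :
    HasDerivAt (fun ξ : ℝ => Real.exp (ξ^2/(8*t)))
      (Real.exp (ξ^2/(8*t)) * (ξ/(4*t))) ξ := by
  have h1 : HasDerivAt (fun ξ : ℝ => ξ^2/(8*t)) (ξ/(4*t)) ξ := by
    have h := (hasDerivAt_pow 2 ξ).div_const (8*t)
    refine h.congr_deriv ?_
    field_simp
    ring
  exact h1.exp

lemma herm_comp_hasDerivAt (k : ℕ) (t ξ : ℝ) :
    HasDerivAt (fun ξ : ℝ => hermiteFn k ((2*Real.sqrt t)⁻¹*ξ))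
      (dH k ((2*Real.sqrt t)⁻¹*ξ) * (2*Real.sqrt t)⁻¹) ξ := by
  have hin : HasDerivAt (fun ξ : ℝ => (2*Real.sqrt t)⁻¹*ξ) ((2*Real.sqrt t)⁻¹) ξ := by
    simpa using (hasDerivAt_id ξ).const_mul (2*Real.sqrt t)⁻¹
  exact (hermiteFn_hasDerivAt k _).comp ξ hin

lemma Ffun_hasDerivAt_x (k : ℕ) (t ξ : ℝ) (ht : 0 < t) :
    HasDerivAt (fun ξ => Ffun k t ξ) (FxD k t ξ) ξ := by
  have h := ((herm_comp_hasDerivAt k t ξ).mul (exp_hasDerivAt_x t ξ ht)).const_mul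
    (Real.sqrt t ^ k)
  have hf : (fun ξ => Ffun k t ξ)
      = fun ξ => Real.sqrt t ^ k * (hermiteFn k ((2*Real.sqrt t)⁻¹*ξ) * Real.exp (ξ^2/(8*t))) := by
    funext y; rw [Ffun]; ring
  rw [hf, FxD]
  exact h

lemma FxD_hasDerivAt_x (k : ℕ) (t ξ : ℝ) (ht : 0 < t) :
    HasDerivAt (fun ξ => FxD k t ξ) (FxxD k t ξ) ξ := by
  have hdh : HasDerivAt (fun ξ : ℝ => dH k ((2*Real.sqrt t)⁻¹*ξ))
      (((((2*Real.sqrt t)⁻¹*ξ)^2 - 2*k - 1) * hermiteFn k ((2*Real.sqrt t)⁻¹*ξ))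
        * (2*Real.sqrt t)⁻¹) ξ := by
    have hin : HasDerivAt (fun ξ : ℝ => (2*Real.sqrt t)⁻¹*ξ) ((2*Real.sqrt t)⁻¹) ξ := by
      simpa using (hasDerivAt_id ξ).const_mul (2*Real.sqrt t)⁻¹
    exact (dH_hasDerivAt k _).comp ξ hin
  have hE := exp_hasDerivAt_x t ξ ht
  have hE2 : HasDerivAt (fun ξ : ℝ => Real.exp (ξ^2/(8*t)) * (ξ/(4*t)))
      (Real.exp (ξ^2/(8*t)) * (ξ/(4*t)) * (ξ/(4*t)) + Real.exp (ξ^2/(8*t)) * (1/(4*t))) ξ := by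
    have h1 : HasDerivAt (fun ξ : ℝ => ξ/(4*t)) (1/(4*t)) ξ := by
      simpa using (hasDerivAt_id ξ).div_const (4*t)
    exact hE.mul h1
  have h := ((((hdh.mul_const ((2*Real.sqrt t)⁻¹)).mul hE).add
    ((herm_comp_hasDerivAt k t ξ).mul hE2)).const_mul (Real.sqrt t ^ k))
  have hf : (fun ξ => FxD k t ξ)
      = fun ξ => Real.sqrt t ^ k * (dH k ((2*Real.sqrt t)⁻¹*ξ) * (2*Real.sqrt t)⁻¹
          * Real.exp (ξ^2/(8*t))
        + hermiteFn k ((2*Real.sqrt t)⁻¹*ξ) * (Real.exp (ξ^2/(8*t)) * (ξ/(4*t)))) := by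
    funext y; rw [FxD]
  rw [hf, FxxD]
  refine h.congr_deriv ?_
  ring

lemma Ffun_hasDerivAt_t (k : ℕ) (t ξ : ℝ) (ht : 0 < t) :
    HasDerivAt (fun t => Ffun k t ξ) (FtD k t ξ) t := by
  have hs : (0:ℝ) < Real.sqrt t := Real.sqrt_pos.mpr ht
  have hsq : HasDerivAt Real.sqrt (1/(2*Real.sqrt t)) t := Real.hasDerivAt_sqrt ht.ne'
  have hpow : HasDerivAt (fun t : ℝ => Real.sqrt t ^ k)
      ((k : ℝ) * Real.sqrt t^(k-1) * (1/(2*Real.sqrt t))) t := hsq.pow k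
  have h2s : (2*Real.sqrt t) ≠ 0 := by positivity
  have hinv : HasDerivAt (fun t : ℝ => (2*Real.sqrt t)⁻¹ * ξ)
      (-(2*(1/(2*Real.sqrt t))) / (2*Real.sqrt t)^2 * ξ) t :=
    ((hsq.const_mul 2).inv h2s).mul_const ξ
  have hherm : HasDerivAt (fun t : ℝ => hermiteFn k ((2*Real.sqrt t)⁻¹ * ξ))
      (dH k ((2*Real.sqrt t)⁻¹*ξ) * (-(2*(1/(2*Real.sqrt t))) / (2*Real.sqrt t)^2 * ξ)) t :=
    (hermiteFn_hasDerivAt k _).comp t hinv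
  have h8t : (8*t : ℝ) ≠ 0 := by positivity
  have hexp : HasDerivAt (fun t : ℝ => Real.exp (ξ^2/(8*t)))
      (Real.exp (ξ^2/(8*t)) * -(ξ^2*8/(8*t)^2)) t := by
    have hin : HasDerivAt (fun t : ℝ => ξ^2/(8*t)) (-(ξ^2*8/(8*t)^2)) t := by
      have h := (((hasDerivAt_id t).const_mul (8:ℝ)).inv h8t).const_mul (ξ^2)
      simp only [mul_one, id_eq] at h
      have heq : (fun t : ℝ => ξ^2/(8*t)) = fun t : ℝ => ξ^2 * (8*t)⁻¹ := by
        funext y; rw [div_eq_mul_inv]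
      rw [heq]
      refine h.congr_deriv ?_
      field_simp
    exact hin.exp
  have h := (hpow.mul hherm).mul hexp
  have hf : (fun t => Ffun k t ξ)
      = fun t => (Real.sqrt t ^ k * hermiteFn k ((2*Real.sqrt t)⁻¹ * ξ))
          * Real.exp (ξ^2/(8*t)) := by
    funext y; rw [Ffun]
  rw [hf, FtD]
  refine h.congr_deriv ?_
  simp only [Pi.mul_apply]
  ring

lemma FxxD_add_FtD (k : ℕ) (t ξ : ℝ) (ht : 0 < t) :
    FxxD k t ξ + FtD k t ξ = 0 := by
  have hs : (0:ℝ) < Real.sqrt t := Real.sqrt_pos.mpr ht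
  have h2 : Real.sqrt t ^ 2 = t := Real.sq_sqrt ht.le
  rw [FxxD, FtD]
  set s := Real.sqrt t with hsdef
  rw [← h2]
  set Hv := hermiteFn k ((2*s)⁻¹*ξ)
  set Dv := dH k ((2*s)⁻¹*ξ)
  have hsne : s ≠ 0 := ne_of_gt hs
  cases k with
  | zero =>
    push_cast
    field_simp
    ring
  | succ m =>
    simp only [Nat.add_sub_cancel]
    push_cast
    field_simp
    ring

lemma iter2 (k : ℕ) (t : ℝ) (ht : 0 < t) (C ξ : ℝ) :
    iteratedDeriv 2 (fun s => C * Ffun k t (ξ + s)) 0 = C * FxxD k t ξ := by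
  have hshift : ∀ ρ : ℝ, HasDerivAt (fun s : ℝ => C * Ffun k t (ξ + s))
      (C * FxD k t (ξ + ρ)) ρ := by
    intro ρ
    have hin : HasDerivAt (fun s : ℝ => ξ + s) 1 ρ := by
      simpa using (hasDerivAt_id ρ).const_add ξ
    have := ((Ffun_hasDerivAt_x k t (ξ+ρ) ht).comp ρ hin).const_mul C
    simpa using this
  have hshift2 : ∀ ρ : ℝ, HasDerivAt (fun s : ℝ => C * FxD k t (ξ + s))
      (C * FxxD k t (ξ + ρ)) ρ := by
    intro ρ
    have hin : HasDerivAt (fun s : ℝ => ξ + s) 1 ρ := by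
      simpa using (hasDerivAt_id ρ).const_add ξ
    have := ((FxD_hasDerivAt_x k t (ξ+ρ) ht).comp ρ hin).const_mul C
    simpa using this
  have h2 : iteratedDeriv 2 (fun s => C * Ffun k t (ξ + s))
      = deriv (deriv (fun s => C * Ffun k t (ξ + s))) := by
    rw [iteratedDeriv_succ, iteratedDeriv_one]
  rw [h2]
  have hd1 : deriv (fun s => C * Ffun k t (ξ + s)) = fun s => C * FxD k t (ξ + s) :=
    funext fun ρ => (hshift ρ).deriv
  rw [hd1]
  have := (hshift2 0).deriv
  rwa [add_zero] at this

lemma Qfun_prod (n : ℕ) (α : Fin n → ℕ) (z : EuclideanSpace ℝ (Fin n)) (t : ℝ) :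
    Qfun n α z t = ∏ j, Ffun (α j) t (z j) := by
  rw [Qfun, hermiteFnN]
  have hn : ‖z‖^2 = ∑ j, (z j)^2 := by
    rw [EuclideanSpace.norm_eq, Real.sq_sqrt (by positivity)]
    simp [Real.norm_eq_abs, sq_abs]
  rw [hn, Finset.sum_div, Real.exp_sum, ← Finset.prod_pow_eq_pow_sum,
    ← Finset.prod_mul_distrib, ← Finset.prod_mul_distrib]
  refine Finset.prod_congr rfl fun j _ => ?_
  rw [Ffun]
  have : ((2 * Real.sqrt t)⁻¹ • z) j = (2 * Real.sqrt t)⁻¹ * z j := by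
    simp [smul_eq_mul]
  rw [this]

theorem Qfun_backward_caloric (n : ℕ) (α : Fin n → ℕ)
    (x : EuclideanSpace ℝ (Fin n)) (t : ℝ) (ht : 0 < t) :
    lap n (fun z => Qfun n α z t) x + deriv (Qfun n α x) t = 0 := by
  -- Laplacian part
  have hlap : lap n (fun z => Qfun n α z t) x
      = ∑ j, (∏ i ∈ Finset.univ.erase j, Ffun (α i) t (x i)) * FxxD (α j) t (x j) := by
    rw [lap]
    refine Finset.sum_congr rfl fun j _ => ?_
    have hfe : (fun s : ℝ => Qfun n α (x + s • EuclideanSpace.single j (1:ℝ)) t)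
        = fun s => (∏ i ∈ Finset.univ.erase j, Ffun (α i) t (x i))
            * Ffun (α j) t (x j + s) := by
      funext s
      rw [Qfun_prod]
      rw [← Finset.mul_prod_erase Finset.univ _ (Finset.mem_univ j), mul_comm]
      congr 1
      · refine Finset.prod_congr rfl fun i hi => ?_
        have hij : i ≠ j := Finset.ne_of_mem_erase hi
        have : (x + s • EuclideanSpace.single j (1:ℝ)) i = x i := by
          simp [EuclideanSpace.single_apply, hij]
        rw [this]
      · have : (x + s • EuclideanSpace.single j (1:ℝ)) j = x j + s := by
          simp [EuclideanSpace.single_apply]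
        rw [this]
    rw [hfe, iter2 (α j) t ht _ (x j)]
  -- time-derivative part
  have hQt : Qfun n α x = fun t => ∏ j, Ffun (α j) t (x j) :=
    funext fun t => Qfun_prod n α x t
  have hdt : HasDerivAt (fun t => ∏ j, Ffun (α j) t (x j))
      (∑ j, (∏ i ∈ Finset.univ.erase j, Ffun (α i) t (x i)) * FtD (α j) t (x j)) t := by
    have h := HasDerivAt.fun_finsetProd (u := Finset.univ)
      (f := fun (j : Fin n) (t : ℝ) => Ffun (α j) t (x j))
      (f' := fun j => FtD (α j) t (x j))
      (fun j _ => Ffun_hasDerivAt_t (α j) t (x j) ht)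
    simpa [smul_eq_mul] using h
  rw [hlap, hQt, hdt.deriv, ← Finset.sum_add_distrib]
  refine Finset.sum_eq_zero fun j _ => ?_
  rw [← mul_add, FxxD_add_FtD _ _ _ ht, mul_zero]
end

section
/- For each α ∈ ℕⁿ with |α| = k, the function w(y,s) = s^{-(k+n)/2} φ_α(y/(2√s)) e^{-|y|²/(8s)}, defined for s > 0, is forward caloric: Δw - ∂_s w = 0 on ℝⁿ × (0,∞); moreover w is the Appell transform of Q_α(x,t) = t^{k/2} φ_α(x/(2√t)) e^{|x|²/(8t)}. -/
open Real Finset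

open scoped ContDiff

noncomputable def Dk (k : ℕ) (x : ℝ) : ℝ := iteratedDeriv k (fun y : ℝ => Real.exp (-y ^ 2)) x

lemma contDiff_gauss : ContDiff ℝ ∞ (fun y : ℝ => Real.exp (-y ^ 2)) :=
  ((contDiff_id.pow 2).neg).exp

lemma Dk_eq (k : ℕ) : Dk k = iteratedDeriv k (fun y : ℝ => Real.exp (-y ^ 2)) := rfl

lemma contDiff_Dk (k : ℕ) : ContDiff ℝ ∞ (Dk k) := by
  rw [Dk_eq, iteratedDeriv_eq_iterate]
  exact contDiff_gauss.iterate_deriv k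

lemma deriv_Dk (k : ℕ) : deriv (Dk k) = Dk (k + 1) := by
  rw [Dk_eq, Dk_eq, iteratedDeriv_succ]

lemma hasDerivAt_Dk (k : ℕ) (x : ℝ) : HasDerivAt (Dk k) (Dk (k + 1) x) x := by
  have h := ((contDiff_Dk k).differentiable (by norm_num) x).hasDerivAt
  rwa [deriv_Dk] at h

lemma Dk_zero (x : ℝ) : Dk 0 x = Real.exp (-x ^ 2) := by simp [Dk]

lemma Dk_one (x : ℝ) : Dk 1 x = -2 * x * Real.exp (-x ^ 2) := by
  have h : ∀ y : ℝ, HasDerivAt (fun y : ℝ => Real.exp (-y ^ 2))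
      (Real.exp (-y ^ 2) * (-(2 * y))) y := by
    intro y
    exact ((hasDerivAt_pow 2 y).neg).exp.congr_deriv (by simp only [Pi.neg_apply]; ring)
  have : Dk 1 x = deriv (fun y : ℝ => Real.exp (-y ^ 2)) x := by
    simp [Dk, iteratedDeriv_one]
  rw [this, (h x).deriv]; ring

lemma Dk_rec : ∀ (k : ℕ) (x : ℝ), Dk (k + 2) x = -2 * x * Dk (k + 1) x - 2 * (k + 1) * Dk k x := by
  intro k
  induction k with
  | zero =>
    intro x
    have h1 : Dk 1 = fun x : ℝ => -2 * x * Real.exp (-x ^ 2) := funext Dk_one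
    have h2 : HasDerivAt (fun x : ℝ => -2 * x * Real.exp (-x ^ 2))
        (-2 * Real.exp (-x ^ 2) + -2 * x * (Real.exp (-x ^ 2) * (-(2 * x)))) x := by
      have he : HasDerivAt (fun y : ℝ => Real.exp (-y ^ 2)) (Real.exp (-x ^ 2) * (-(2 * x))) x :=
        ((hasDerivAt_pow 2 x).neg).exp.congr_deriv (by simp only [Pi.neg_apply]; ring)
      have hx : HasDerivAt (fun y : ℝ => -2 * y) (-2 : ℝ) x := by
        simpa using (hasDerivAt_id x).const_mul (-2 : ℝ)
      simpa using hx.fun_mul he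
    have : Dk 2 x = deriv (Dk 1) x := by rw [deriv_Dk]
    rw [this, h1, h2.deriv, Dk_zero]; simp only []
    push_cast; ring
  | succ m ih =>
    intro x
    have h1 : Dk (m + 2) = fun x : ℝ => -2 * x * Dk (m + 1) x - 2 * (m + 1) * Dk m x :=
      funext ih
    have h2 : HasDerivAt (fun x : ℝ => -2 * x * Dk (m + 1) x - 2 * (m + 1) * Dk m x)
        ((-2 * Dk (m + 1) x + -2 * x * Dk (m + 2) x) - 2 * (m + 1) * Dk (m + 1) x) x := by
      have hx : HasDerivAt (fun y : ℝ => -2 * y) (-2 : ℝ) x := by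
        simpa using (hasDerivAt_id x).const_mul (-2 : ℝ)
      exact (hx.mul (hasDerivAt_Dk (m + 1) x)).sub ((hasDerivAt_Dk m x).const_mul _)
    have : Dk (m + 3) x = deriv (Dk (m + 2)) x := by rw [deriv_Dk]
    rw [this, h1, h2.deriv, ← h1]
    have := ih x
    push_cast
    push_cast at this
    rw [this]; ring

/-- `A k x = e^{x²/2} D^k e^{-x²}`. -/
noncomputable def Ak (k : ℕ) (x : ℝ) : ℝ := Real.exp (x ^ 2 / 2) * Dk k x

lemma hasDerivAt_Ak (k : ℕ) (x : ℝ) :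
    HasDerivAt (Ak k) (x * Ak k x + Ak (k + 1) x) x := by
  have he : HasDerivAt (fun x : ℝ => Real.exp (x ^ 2 / 2)) (Real.exp (x ^ 2 / 2) * x) x := by
    exact ((hasDerivAt_pow 2 x).div_const 2).exp.congr_deriv (by ring)
  have := he.mul (hasDerivAt_Dk k x)
  exact this.congr_deriv (by unfold Ak; ring)

lemma Ak_rec (k : ℕ) (x : ℝ) :
    Ak (k + 2) x = -2 * x * Ak (k + 1) x - 2 * (k + 1) * Ak k x := by
  unfold Ak; rw [Dk_rec]; ring

/-- The coordinate factor `B k x s = A_k(x/(2√s)) e^{-x²/(8s)}`. -/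
noncomputable def Bk (k : ℕ) (x s : ℝ) : ℝ :=
  Ak k (x / (2 * Real.sqrt s)) * Real.exp (-x ^ 2 / (8 * s))

lemma Bk_rec (k : ℕ) {s : ℝ} (hs : 0 < s) (x : ℝ) :
    Bk (k + 2) x s = -(x / Real.sqrt s) * Bk (k + 1) x s - 2 * (k + 1) * Bk k x s := by
  unfold Bk
  rw [Ak_rec]
  have h : -2 * (x / (2 * Real.sqrt s)) = -(x / Real.sqrt s) := by
    have : Real.sqrt s ≠ 0 := (Real.sqrt_pos.mpr hs).ne'
    field_simp
  rw [sub_mul, h]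
  ring

lemma hasDerivAt_Bk_x (k : ℕ) {s : ℝ} (hs : 0 < s) (x : ℝ) :
    HasDerivAt (fun x => Bk k x s) ((2 * Real.sqrt s)⁻¹ * Bk (k + 1) x s) x := by
  have hsq : Real.sqrt s * Real.sqrt s = s := Real.mul_self_sqrt hs.le
  have hsne : Real.sqrt s ≠ 0 := (Real.sqrt_pos.mpr hs).ne'
  set u := x / (2 * Real.sqrt s) with hu
  have h1 : HasDerivAt (fun x : ℝ => x / (2 * Real.sqrt s)) ((2 * Real.sqrt s)⁻¹) x := by
    simpa [div_eq_mul_inv] using (hasDerivAt_id x).mul_const (2 * Real.sqrt s)⁻¹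
  have h2 : HasDerivAt (fun x : ℝ => Ak k (x / (2 * Real.sqrt s)))
      ((u * Ak k u + Ak (k + 1) u) * (2 * Real.sqrt s)⁻¹) x :=
    by rw [hu]; exact (hasDerivAt_Ak k _).comp x h1
  have h3 : HasDerivAt (fun x : ℝ => Real.exp (-x ^ 2 / (8 * s)))
      (Real.exp (-x ^ 2 / (8 * s)) * (-(2 * x) / (8 * s))) x := by
    exact (((hasDerivAt_pow 2 x).neg.div_const (8 * s)).exp).congr_deriv (by simp only [Pi.neg_apply]; ring)
  have h4 := h2.mul h3
  apply h4.congr_deriv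
  unfold Bk
  rw [← hu]
  have hx : -(2 * x) / (8 * s) = -u * (2 * Real.sqrt s)⁻¹ := by
    rw [hu]; field_simp; linear_combination (-8 * x) * hsq
  rw [hx]; ring

lemma hasDerivAt_Bk_s (k : ℕ) (x : ℝ) {s : ℝ} (hs : 0 < s) :
    HasDerivAt (fun s => Bk k x s) (-(x / (4 * s * Real.sqrt s)) * Bk (k + 1) x s) s := by
  have hsq : Real.sqrt s * Real.sqrt s = s := Real.mul_self_sqrt hs.le
  have hsne : Real.sqrt s ≠ 0 := (Real.sqrt_pos.mpr hs).ne'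
  have hsne' : s ≠ 0 := hs.ne'
  set u := x / (2 * Real.sqrt s) with hu
  have hden : HasDerivAt (fun s : ℝ => 2 * Real.sqrt s) (2 * (1 / (2 * Real.sqrt s))) s :=
    (Real.hasDerivAt_sqrt hsne').const_mul 2
  have hdenne : 2 * Real.sqrt s ≠ 0 := by positivity
  have h1 : HasDerivAt (fun s : ℝ => x / (2 * Real.sqrt s))
      ((0 * (2 * Real.sqrt s) - x * (2 * (1 / (2 * Real.sqrt s)))) / (2 * Real.sqrt s) ^ 2) s :=
    (hasDerivAt_const s x).div hden hdenne
  have h2 : HasDerivAt (fun s : ℝ => Ak k (x / (2 * Real.sqrt s)))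
      ((u * Ak k u + Ak (k + 1) u) *
        ((0 * (2 * Real.sqrt s) - x * (2 * (1 / (2 * Real.sqrt s)))) / (2 * Real.sqrt s) ^ 2)) s :=
    by rw [hu]; exact (hasDerivAt_Ak k _).comp s h1
  have h8 : HasDerivAt (fun s : ℝ => 8 * s) (8 : ℝ) s := by
    simpa using (hasDerivAt_id s).const_mul (8 : ℝ)
  have h8ne : (8 : ℝ) * s ≠ 0 := by positivity
  have h3 : HasDerivAt (fun s : ℝ => Real.exp (-x ^ 2 / (8 * s)))
      (Real.exp (-x ^ 2 / (8 * s)) * ((0 * (8 * s) - -x ^ 2 * 8) / (8 * s) ^ 2)) s :=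
    ((hasDerivAt_const s (-x ^ 2)).div h8 h8ne).exp
  have h4 := h2.mul h3
  apply h4.congr_deriv
  unfold Bk
  rw [← hu]
  have e1 : (0 * (2 * Real.sqrt s) - x * (2 * (1 / (2 * Real.sqrt s)))) / (2 * Real.sqrt s) ^ 2
      = -(x / (4 * s * Real.sqrt s)) := by
    field_simp; linear_combination 4 * x * hsq
  have e2 : (0 * (8 * s) - -x ^ 2 * 8) / (8 * s) ^ 2 = x ^ 2 / (8 * s ^ 2) := by
    field_simp; ring
  rw [e1, e2]
  have e3 : u * -(x / (4 * s * Real.sqrt s)) + x ^ 2 / (8 * s ^ 2) = 0 := by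
    rw [hu]; field_simp; linear_combination 8 * x ^ 2 * hsq
  linear_combination (Ak k u * Real.exp (-x ^ 2 / (8 * s))) * e3

/-- Normalizing constant of the Hermite functions. -/
noncomputable def Hck (k : ℕ) : ℝ :=
  (Real.sqrt (2 ^ k * (Nat.factorial k : ℝ) * Real.sqrt Real.pi))⁻¹ * (-1 : ℝ) ^ k

lemma hermiteFn_eq_s10 (k : ℕ) (x : ℝ) : hermiteFn k x = Hck k * Ak k x := by
  unfold hermiteFn Hck Ak Dk; ring

lemma iteratedDeriv2_Bk (k : ℕ) {s : ℝ} (hs : 0 < s) (c a : ℝ) :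
    iteratedDeriv 2 (fun t => c * Bk k (a + t) s) 0
      = c * ((2 * Real.sqrt s)⁻¹ * ((2 * Real.sqrt s)⁻¹ * Bk (k + 2) a s)) := by
  have hshift : ∀ (m : ℕ) (t c : ℝ), HasDerivAt (fun t => c * Bk m (a + t) s)
      (c * ((2 * Real.sqrt s)⁻¹ * Bk (m + 1) (a + t) s)) t := by
    intro m t c
    have h := ((hasDerivAt_Bk_x m hs (a + t)).comp t ((hasDerivAt_id t).const_add a)).const_mul c
    simpa [Function.comp] using h
  rw [iteratedDeriv_succ, iteratedDeriv_one]
  have hd1 : deriv (fun t => c * Bk k (a + t) s)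
      = fun t => c * (2 * Real.sqrt s)⁻¹ * Bk (k + 1) (a + t) s := by
    funext t; rw [(hshift k t c).deriv]; ring
  rw [hd1, (hshift (k + 1) 0 (c * (2 * Real.sqrt s)⁻¹)).deriv]
  simp only [add_zero]; ring

lemma rep (n : ℕ) (α : Fin n → ℕ) {s : ℝ} (hs : 0 < s) (y : EuclideanSpace ℝ (Fin n)) :
    hermiteFnN n α ((2 * Real.sqrt s)⁻¹ • y) * Real.exp (-‖y‖ ^ 2 / (8 * s))
      = (∏ j, Hck (α j)) * ∏ j, Bk (α j) (y j) s := by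
  have hnorm : ‖y‖ ^ 2 = ∑ j, (y j) ^ 2 := by
    rw [EuclideanSpace.norm_eq, Real.sq_sqrt (by positivity)]
    simp [Real.norm_eq_abs, sq_abs]
  have hexp : Real.exp (-‖y‖ ^ 2 / (8 * s)) = ∏ j, Real.exp (-(y j) ^ 2 / (8 * s)) := by
    rw [← Real.exp_sum]
    congr 1
    rw [hnorm, neg_div, Finset.sum_div, ← Finset.sum_neg_distrib]
    congr 1; funext j; rw [neg_div]
  rw [hexp]
  unfold hermiteFnN
  rw [← Finset.prod_mul_distrib, ← Finset.prod_mul_distrib]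
  apply Finset.prod_congr rfl
  intro j _
  have hcoord : ((2 * Real.sqrt s)⁻¹ • y) j = y j / (2 * Real.sqrt s) := by
    simp [PiLp.smul_apply, smul_eq_mul, div_eq_inv_mul, mul_comm]
  rw [hcoord, hermiteFn_eq_s10]
  unfold Bk; ring


theorem appell_of_Qfun_forward_caloric (n : ℕ) (α : Fin n → ℕ) (k : ℕ) (hk : ∑ j, α j = k)
    (w : EuclideanSpace ℝ (Fin n) → ℝ → ℝ)
    (hw : ∀ (y : EuclideanSpace ℝ (Fin n)) (s : ℝ), 0 < s →
      w y s = s ^ (-((k : ℝ) + n) / 2) * hermiteFnN n α ((2 * Real.sqrt s)⁻¹ • y) *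
        Real.exp (-‖y‖ ^ 2 / (8 * s))) :
    (∀ (y : EuclideanSpace ℝ (Fin n)) (s : ℝ), 0 < s →
      lap n (fun z => w z s) y - deriv (w y) s = 0) ∧
    (∀ (y : EuclideanSpace ℝ (Fin n)) (s : ℝ), 0 < s →
      w y s = s ^ (-(n : ℝ) / 2) * Real.exp (-‖y‖ ^ 2 / (4 * s)) * Qfun n α (s⁻¹ • y) s⁻¹) := by
  have hrepr : ∀ (z : EuclideanSpace ℝ (Fin n)) (s : ℝ), 0 < s →
      w z s = s ^ (-((k : ℝ) + n) / 2) * (∏ j, Hck (α j)) * ∏ j, Bk (α j) (z j) s := by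
    intro z s hs
    rw [hw z s hs, mul_assoc, rep n α hs z, ← mul_assoc]
  constructor
  · intro y s hs
    have hsq : Real.sqrt s * Real.sqrt s = s := Real.mul_self_sqrt hs.le
    have hsne : Real.sqrt s ≠ 0 := (Real.sqrt_pos.mpr hs).ne'
    set m : ℝ := -((k : ℝ) + n) / 2 with hm
    set Cc : ℝ := ∏ j, Hck (α j) with hC
    set P : ℝ := ∏ j, Bk (α j) (y j) s with hP
    set E : Fin n → ℝ := fun j => ∏ i ∈ univ.erase j, Bk (α i) (y i) s with hE
    -- Laplacian
    have hlap : lap n (fun z => w z s) y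
        = ∑ j, (s ^ m * Cc * E j) *
            ((2 * Real.sqrt s)⁻¹ * ((2 * Real.sqrt s)⁻¹ * Bk (α j + 2) (y j) s)) := by
      unfold lap
      apply Finset.sum_congr rfl
      intro j _
      have hfun : (fun t : ℝ => w (y + t • EuclideanSpace.single j (1 : ℝ)) s)
          = fun t => (s ^ m * Cc * E j) * Bk (α j) (y j + t) s := by
        funext t
        rw [hrepr _ s hs]
        rw [← Finset.prod_erase_mul univ _ (mem_univ j)]
        have h1 : ∀ i ∈ univ.erase j,
            Bk (α i) ((y + t • EuclideanSpace.single j (1 : ℝ)) i) s = Bk (α i) (y i) s := by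
          intro i hi
          have hij : i ≠ j := (Finset.mem_erase.mp hi).1
          congr 1
          simp [EuclideanSpace.single_apply, hij]
        have h2 : (y + t • EuclideanSpace.single j (1 : ℝ)) j = y j + t := by
          simp [EuclideanSpace.single_apply]
        rw [Finset.prod_congr rfl h1, h2, hE]
        ring
      rw [hfun, iteratedDeriv2_Bk (α j) hs _ (y j)]
    -- time derivative
    have hpow : HasDerivAt (fun s' : ℝ => s' ^ m) (m * s ^ (m - 1)) s :=
      Real.hasDerivAt_rpow_const (Or.inl hs.ne')
    have hprod : HasDerivAt (fun s' => ∏ j, Bk (α j) (y j) s')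
        (∑ j, E j • (-(y j / (4 * s * Real.sqrt s)) * Bk (α j + 1) (y j) s)) s := by
      exact HasDerivAt.fun_finsetProd (fun j _ => hasDerivAt_Bk_s (α j) (y j) hs)
    have hcomb := (hpow.mul_const Cc).mul hprod
    have hev : w y =ᶠ[nhds s] fun s' => s' ^ m * Cc * ∏ j, Bk (α j) (y j) s' := by
      filter_upwards [Ioi_mem_nhds hs] with s' hs'
      exact hrepr y s' hs'
    have hderiv : deriv (w y) s
        = m * s ^ (m - 1) * Cc * P +
          s ^ m * Cc * ∑ j, E j • (-(y j / (4 * s * Real.sqrt s)) * Bk (α j + 1) (y j) s) := by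
      rw [hev.deriv_eq]; exact hcomb.deriv
    rw [hlap, hderiv]
    -- per-coordinate combination
    have hEP : ∀ j, E j * Bk (α j) (y j) s = P := fun j =>
      Finset.prod_erase_mul univ _ (mem_univ j)
    rw [Finset.mul_sum]
    have hterm : ∀ j ∈ (univ : Finset (Fin n)),
        (s ^ m * Cc * E j) *
            ((2 * Real.sqrt s)⁻¹ * ((2 * Real.sqrt s)⁻¹ * Bk (α j + 2) (y j) s))
          - s ^ m * Cc * (E j • (-(y j / (4 * s * Real.sqrt s)) * Bk (α j + 1) (y j) s))
        = (-((α j : ℝ) + 1) / (2 * s)) * (s ^ m * Cc * P) := by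
      intro j _
      rw [Bk_rec (α j) hs (y j), smul_eq_mul, ← hEP j]
      have key : (2 * Real.sqrt s)⁻¹ * ((2 * Real.sqrt s)⁻¹ *
            (-(y j / Real.sqrt s) * Bk (α j + 1) (y j) s
              - 2 * ((α j : ℝ) + 1) * Bk (α j) (y j) s))
          - (-(y j / (4 * s * Real.sqrt s)) * Bk (α j + 1) (y j) s)
          = (-((α j : ℝ) + 1) / (2 * s)) * Bk (α j) (y j) s := by
        field_simp
        linear_combination (4 * y j * Bk (α j + 1) (y j) s +
          8 * Real.sqrt s * Bk (α j) (y j) s * ((α j : ℝ) + 1)) * hsq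
      linear_combination (s ^ m * Cc * E j) * key
    have hsum : ∑ j, ((s ^ m * Cc * E j) *
            ((2 * Real.sqrt s)⁻¹ * ((2 * Real.sqrt s)⁻¹ * Bk (α j + 2) (y j) s)))
          - ∑ j, s ^ m * Cc * (E j • (-(y j / (4 * s * Real.sqrt s)) * Bk (α j + 1) (y j) s))
        = ∑ j, (-((α j : ℝ) + 1) / (2 * s)) * (s ^ m * Cc * P) := by
      rw [← Finset.sum_sub_distrib]
      exact Finset.sum_congr rfl hterm
    have hsum2 : ∑ j, (-((α j : ℝ) + 1) / (2 * s)) * (s ^ m * Cc * P)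
        = (-(((k : ℝ) + n)) / (2 * s)) * (s ^ m * Cc * P) := by
      have hksum : ∑ j, ((α j : ℝ) + 1) = (k : ℝ) + n := by
        rw [Finset.sum_add_distrib]
        push_cast [← hk]
        simp [Finset.card_univ]
      rw [← Finset.sum_mul, ← Finset.sum_div, Finset.sum_neg_distrib, hksum]
    have hpow2 : s ^ (m - 1) = s ^ m / s := by
      rw [Real.rpow_sub hs, Real.rpow_one]
    have : (∑ j, (s ^ m * Cc * E j) *
            ((2 * Real.sqrt s)⁻¹ * ((2 * Real.sqrt s)⁻¹ * Bk (α j + 2) (y j) s)))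
          - (m * s ^ (m - 1) * Cc * P +
            ∑ j, s ^ m * Cc * (E j • (-(y j / (4 * s * Real.sqrt s)) * Bk (α j + 1) (y j) s)))
        = (∑ j, (-((α j : ℝ) + 1) / (2 * s)) * (s ^ m * Cc * P)) - m * s ^ (m - 1) * Cc * P := by
      rw [← hsum]; ring
    rw [this, hsum2, hpow2, hm]
    field_simp
    ring
  · intro y s hs
    have hsq : Real.sqrt s * Real.sqrt s = s := Real.mul_self_sqrt hs.le
    have hsne : Real.sqrt s ≠ 0 := (Real.sqrt_pos.mpr hs).ne'
    rw [hw y s hs]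
    unfold Qfun
    rw [hk]
    have h1 : (2 * Real.sqrt s⁻¹)⁻¹ • (s⁻¹ • y) = (2 * Real.sqrt s)⁻¹ • y := by
      rw [smul_smul]
      congr 1
      rw [Real.sqrt_inv]
      field_simp
      linear_combination hsq
    have h2 : ‖s⁻¹ • y‖ ^ 2 = s⁻¹ ^ 2 * ‖y‖ ^ 2 := by
      rw [norm_smul, mul_pow, Real.norm_eq_abs, sq_abs]
    have h3 : Real.sqrt s⁻¹ ^ k = s ^ (-(k : ℝ) / 2) := by
      have e0 : Real.sqrt s⁻¹ ^ k = ((s ^ (-1 : ℝ)) ^ ((1 : ℝ) / 2)) ^ (k : ℕ) := by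
        rw [Real.rpow_neg_one, Real.sqrt_eq_rpow]
      rw [e0, ← Real.rpow_natCast ((s ^ (-1 : ℝ)) ^ ((1 : ℝ) / 2)) k,
        ← Real.rpow_mul (by positivity), ← Real.rpow_mul hs.le]
      congr 1; ring
    have h4 : ‖s⁻¹ • y‖ ^ 2 / (8 * s⁻¹) = ‖y‖ ^ 2 / (8 * s) := by
      rw [h2]; field_simp
    have h5 : s ^ (-((k : ℝ) + n) / 2) = s ^ (-(n : ℝ) / 2) * s ^ (-(k : ℝ) / 2) := by
      rw [← Real.rpow_add hs]; ring_nf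
    have h6 : Real.exp (-‖y‖ ^ 2 / (8 * s)) = Real.exp (-‖y‖ ^ 2 / (4 * s)) *
        Real.exp (‖y‖ ^ 2 / (8 * s)) := by
      rw [← Real.exp_add]; congr 1; field_simp; ring
    rw [h1, h3, h4, h5, h6]
    ring
end
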